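/- Let C be a self-adjoint, bounded, positive semidefinite compact linear operator on a separable Hilbert space H whose eigenvalues satisfy σ_k(C) ≤ f(k) for all k ∈ ℕ, where f is a decreasing function. Then for all t > 0, α ≥ 0 and 1 ≤ p < ∞: ‖C^α (C + tI)^{−α}‖_p ≤ inf_{0 ≤ u ≤ 1} g_{uα} t^{−uα}, where g_{uα} := (f(1)^{uαp} + ∫_1^∞ f(x)^{uαp} dx)^{1/p}. -/

import Mathlib

open MeasureTheory ContinuousLinearMap
open scoped ENNReal NNReal InnerProductSpace

noncomputable section

namespace SubspaceLearning

variable {H : Type*} [NormedAddCommGroup H] [InnerProductSpace ℂ H] [CompleteSpace H]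

/-- The rank-one operator `x ⊗ x : u ↦ ⟨x,u⟩ x`. -/
def rankOne (x : H) : H →L[ℂ] H := (innerSL ℂ x).smulRight x

/-- The (uncentered) covariance operator of a measure. -/
def covOp [MeasurableSpace H] (ρ : Measure H) : H →L[ℂ] H := ∫ x, rankOne x ∂ρ

/-- The empirical covariance operator of `n` sample points. -/
def empCov {n : ℕ} (x : Fin n → H) : H →L[ℂ] H := (n : ℂ)⁻¹ • ∑ i, rankOne (x i)

/-- The (topological) support of a measure. -/
def mSupport [MeasurableSpace H] (ρ : Measure H) : Set H :=
  {x : H | ∀ s : Set H, IsOpen s → x ∈ s → ρ s ≠ 0}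

/-- `S_ρ`: the closed linear span of the support of `ρ`. -/
def Sspan [MeasurableSpace H] (ρ : Measure H) : Submodule ℂ H :=
  (Submodule.span ℂ (mSupport ρ)).topologicalClosure

/-- Orthogonal projection onto (the closure of) a subspace, as an endomorphism of `H`. -/
def proj (U : Submodule ℂ H) : H →L[ℂ] H :=
  haveI : CompleteSpace U.topologicalClosure :=
    U.isClosed_topologicalClosure.completeSpace_coe
  U.topologicalClosure.subtypeL.comp (Submodule.orthogonalProjection U.topologicalClosure)

/-- `approxNum A k` : the `k`-th approximation number (`= (k+1)`-th largest singular value,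
for compact `A`); for a positive compact self-adjoint operator it is the `(k+1)`-th
largest eigenvalue (with multiplicity). -/
def approxNum (A : H →L[ℂ] H) (k : ℕ) : ℝ :=
  sInf ((fun F : H →L[ℂ] H => ‖A - F‖) ''
    {F | ∃ V : Submodule ℂ H, FiniteDimensional ℂ V ∧ Module.finrank ℂ V ≤ k ∧
      LinearMap.range (F : H →ₗ[ℂ] H) ≤ V})

/-- Schatten `p`-norm, `‖A‖_p = (∑ σ_k(A)^p)^{1/p}` (operator norm for `p = ∞`). -/
def schatten (p : ℝ≥0∞) (A : H →L[ℂ] H) : ℝ≥0∞ :=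
  if p = ∞ then ENNReal.ofReal ‖A‖
  else (∑' k : ℕ, ENNReal.ofReal (approxNum A k ^ p.toReal)) ^ p.toReal⁻¹

/-- `A^α` for a positive operator `A`, via the continuous functional calculus. -/
def opow (A : H →L[ℂ] H) (α : ℝ) : H →L[ℂ] H := cfc (fun s : ℝ => s ^ α) A

/-- `(A + t I)^α` for a positive operator `A`, via the continuous functional calculus. -/
def resPow (A : H →L[ℂ] H) (t α : ℝ) : H →L[ℂ] H := cfc (fun s : ℝ => (s + t) ^ α) A

/-- The distance `d_{α,p}(U,V) = ‖(P_U − P_V) C^α‖_p`. -/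
def dap (C : H →L[ℂ] H) (α : ℝ) (p : ℝ≥0∞) (U V : Submodule ℂ H) : ℝ≥0∞ :=
  schatten p ((proj U - proj V).comp (opow C α))

/-- `W` is the span of eigenvectors of `A` corresponding to its `k` largest
eigenvalues (with multiplicity). -/
def IsTopEigenSubspace (A : H →L[ℂ] H) (k : ℕ) (W : Submodule ℂ H) : Prop :=
  ∃ u : Fin k → H, Orthonormal ℂ u ∧
    (∀ i : Fin k, A (u i) = (approxNum A (i : ℕ) : ℂ) • u i) ∧
    W = Submodule.span ℂ (Set.range u)

/-- Löwner partial order: `A ⪯ B` iff `⟨f, A f⟩ ≤ ⟨f, B f⟩` for all `f`. -/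
def Loewner (A B : H →L[ℂ] H) : Prop :=
  ∀ f : H, (⟪f, A f⟫_ℂ).re ≤ (⟪f, B f⟫_ℂ).re

lemma key_finrank (C F0 : H →L[ℂ] H) {k : ℕ} {σ : ℝ} (V0 : Submodule ℂ H)
    (hV0 : FiniteDimensional ℂ V0) (hV0k : Module.finrank ℂ V0 ≤ k)
    (hF0 : LinearMap.range (F0 : H →ₗ[ℂ] H) ≤ V0) (hn : ‖C - F0‖ < σ)
    (W : Submodule ℂ H) (hW : ∀ w ∈ W, σ * ‖w‖ ^ 2 ≤ (⟪w, C w⟫_ℂ).re) :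
    FiniteDimensional ℂ W ∧ Module.finrank ℂ W ≤ k := by
  -- F0 is injective on W
  have hker : ∀ u ∈ W, F0 u = 0 → u = 0 := by
    intro u hu hF
    by_contra hne
    have hnorm : (0:ℝ) < ‖u‖ ^ 2 := pow_pos (norm_pos_iff.mpr hne) 2
    have h1 : σ * ‖u‖ ^ 2 ≤ (⟪u, C u⟫_ℂ).re := hW u hu
    have h2 : ⟪u, C u⟫_ℂ = ⟪u, (C - F0) u⟫_ℂ := by
      simp [ContinuousLinearMap.sub_apply, hF]
    have h3 : (⟪u, (C - F0) u⟫_ℂ).re ≤ ‖u‖ * ‖(C - F0) u‖ := by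
      refine le_trans (Complex.re_le_norm _) ?_
      exact norm_inner_le_norm (𝕜 := ℂ) u _
    have h4 : ‖(C - F0) u‖ ≤ ‖C - F0‖ * ‖u‖ := (C - F0).le_opNorm u
    have h5 : σ * ‖u‖ ^ 2 ≤ ‖C - F0‖ * ‖u‖ ^ 2 := by
      calc σ * ‖u‖ ^ 2 ≤ (⟪u, (C - F0) u⟫_ℂ).re := h2 ▸ h1
        _ ≤ ‖u‖ * (‖C - F0‖ * ‖u‖) := h3.trans (by
            exact mul_le_mul_of_nonneg_left h4 (norm_nonneg u))
        _ = ‖C - F0‖ * ‖u‖ ^ 2 := by ring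
    have := (mul_le_mul_iff_of_pos_right hnorm).mp h5
    linarith
  -- build an injective map W →ₗ V0
  let ψ : W →ₗ[ℂ] V0 := ((F0 : H →ₗ[ℂ] H).domRestrict W).codRestrict V0
    (fun x => hF0 ⟨x, rfl⟩)
  have hψ : Function.Injective ψ := by
    rw [← LinearMap.ker_eq_bot, LinearMap.ker_eq_bot']
    intro m hm
    have : F0 (m : H) = 0 := by
      have := congrArg (Submodule.subtype V0) hm
      simpa [ψ] using this
    exact Subtype.ext (hker m m.2 this)
  have hfin : FiniteDimensional ℂ W := FiniteDimensional.of_injective ψ hψ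
  exact ⟨hfin, le_trans (LinearMap.finrank_le_finrank_of_injective hψ) hV0k⟩

lemma approxSet_def (A : H →L[ℂ] H) (k : ℕ) : approxNum A k =
  sInf ((fun F : H →L[ℂ] H => ‖A - F‖) ''
    {F | ∃ V : Submodule ℂ H, FiniteDimensional ℂ V ∧ Module.finrank ℂ V ≤ k ∧
      LinearMap.range (F : H →ₗ[ℂ] H) ≤ V}) := rfl

lemma approxSet_nonempty (A : H →L[ℂ] H) (k : ℕ) :
    ((fun F : H →L[ℂ] H => ‖A - F‖) ''
    {F | ∃ V : Submodule ℂ H, FiniteDimensional ℂ V ∧ Module.finrank ℂ V ≤ k ∧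
      LinearMap.range (F : H →ₗ[ℂ] H) ≤ V}).Nonempty := by
  refine ⟨‖A - 0‖, 0, ⟨⊥, inferInstance, ?_, ?_⟩, rfl⟩
  · simp
  · simp [LinearMap.range_le_iff_comap]

lemma approxSet_bddBelow (A : H →L[ℂ] H) (k : ℕ) :
    BddBelow ((fun F : H →L[ℂ] H => ‖A - F‖) ''
    {F | ∃ V : Submodule ℂ H, FiniteDimensional ℂ V ∧ Module.finrank ℂ V ≤ k ∧
      LinearMap.range (F : H →ₗ[ℂ] H) ≤ V}) := by
  refine ⟨0, fun x hx => ?_⟩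
  obtain ⟨F, -, rfl⟩ := hx
  exact norm_nonneg _

lemma approxNum_nonneg (A : H →L[ℂ] H) (k : ℕ) : 0 ≤ approxNum A k :=
  le_csInf (approxSet_nonempty A k) (by rintro x ⟨F, -, rfl⟩; exact norm_nonneg _)

lemma approxNum_le (A F : H →L[ℂ] H) (k : ℕ)
    (h : ∃ V : Submodule ℂ H, FiniteDimensional ℂ V ∧ Module.finrank ℂ V ≤ k ∧
      LinearMap.range (F : H →ₗ[ℂ] H) ≤ V) : approxNum A k ≤ ‖A - F‖ :=
  csInf_le (approxSet_bddBelow A k) ⟨F, h, rfl⟩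

lemma exists_of_approxNum_lt (A : H →L[ℂ] H) (k : ℕ) {σ : ℝ} (h : approxNum A k < σ) :
    ∃ F : H →L[ℂ] H, (∃ V : Submodule ℂ H, FiniteDimensional ℂ V ∧ Module.finrank ℂ V ≤ k ∧
      LinearMap.range (F : H →ₗ[ℂ] H) ≤ V) ∧ ‖A - F‖ < σ := by
  rw [approxSet_def] at h
  obtain ⟨x, hx, hxσ⟩ :=
    (csInf_lt_iff (approxSet_bddBelow A k) (approxSet_nonempty A k)).mp h
  obtain ⟨F, hF, rfl⟩ := hx
  exact ⟨F, hF, hxσ⟩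

lemma re_inner_norm_sq (w : H) : (⟪w, w⟫_ℂ).re = ‖w‖ ^ 2 := by
  exact_mod_cast congrArg Complex.re (inner_self_eq_norm_sq_to_K (𝕜 := ℂ) w)

lemma selfadj_inner_move (B : H →L[ℂ] H) (hB : IsSelfAdjoint B) (v w : H) :
    ⟪B v, w⟫_ℂ = ⟪v, B w⟫_ℂ := by
  rw [← ContinuousLinearMap.adjoint_inner_left, hB.adjoint_eq]

lemma inner_re_smul_op (E : H →L[ℂ] H) (r : ℝ) (v : H) :
    (⟪v, (r • E) v⟫_ℂ).re = r * (⟪v, E v⟫_ℂ).re := by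
  have : (r • E) v = (r : ℂ) • E v := by
    simp [ContinuousLinearMap.smul_apply, Complex.coe_smul]
  rw [this, inner_smul_right]
  exact Complex.re_ofReal_mul r _

lemma approxNum_cfc_le (C : H →L[ℂ] H) (hsa : IsSelfAdjoint C) (hpos : C.IsPositive)
    (g : ℝ → ℝ) (hg : ContinuousOn g (spectrum ℝ C)) (hg0 : ∀ s, 0 ≤ s → 0 ≤ g s)
    {k : ℕ} {σ1 σ2 M : ℝ} (hσ1 : approxNum C k < σ1) (h12 : σ1 < σ2) (hM : 0 ≤ M)
    (hgM : ∀ s, 0 ≤ s → s ≤ σ2 → g s ≤ M) :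
    approxNum (cfc g C) k ≤ M := by
  have hspec : ∀ s ∈ spectrum ℝ C, 0 ≤ s :=
    spectrum_nonneg_of_nonneg ((ContinuousLinearMap.nonneg_iff_isPositive C).mpr hpos)
  set φ : ℝ → ℝ := fun s => min 1 (max 0 ((s - σ1) / (σ2 - σ1))) with hφdef
  have hd : (0:ℝ) < σ2 - σ1 := by linarith
  have hφc : Continuous φ := by
    apply continuous_const.min
    exact continuous_const.max ((continuous_id.sub continuous_const).div_const _)
  have hφ0 : ∀ s ≤ σ1, φ s = 0 := by
    intro s hs
    have : (s - σ1) / (σ2 - σ1) ≤ 0 := div_nonpos_of_nonpos_of_nonneg (by linarith) hd.le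
    have h0 : max 0 ((s - σ1) / (σ2 - σ1)) = 0 := max_eq_left this
    simp [hφdef, h0]
  have hφ1 : ∀ s, σ2 ≤ s → φ s = 1 := by
    intro s hs
    have h1 : (1:ℝ) ≤ (s - σ1) / (σ2 - σ1) := by
      rw [le_div_iff₀ hd]; linarith
    have : max 0 ((s - σ1) / (σ2 - σ1)) = (s - σ1) / (σ2 - σ1) :=
      max_eq_right (by linarith)
    simp [hφdef, this, min_eq_left h1]
  have hφnn : ∀ s, 0 ≤ φ s := fun s => le_min zero_le_one (le_max_left _ _)
  have hφle1 : ∀ s, φ s ≤ 1 := fun s => min_le_left _ _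
  set h : ℝ → ℝ := fun s => g s * φ s with hhdef
  have hh : ContinuousOn h (spectrum ℝ C) := hg.mul hφc.continuousOn
  set F : H →L[ℂ] H := cfc h C with hFdef
  have hFsa : IsSelfAdjoint F := cfc_predicate h C
  -- the quadratic-form bound on the range of F
  have hrange : ∀ w ∈ LinearMap.range (F : H →ₗ[ℂ] H),
      σ1 * ‖w‖ ^ 2 ≤ (⟪w, C w⟫_ℂ).re := by
    rintro w ⟨v, rfl⟩
    have hw : (F : H →ₗ[ℂ] H) v = F v := rfl
    rw [hw]
    have hE : cfc (fun s => h s * h s) C = F * F := cfc_mul h h C hh hh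
    have hD : cfc (fun s => h s * (s * h s)) C = F * (C * F) := by
      rw [cfc_mul h (fun s => s * h s) C hh ((continuous_id.continuousOn).mul hh),
        cfc_mul (fun s : ℝ => s) h C continuous_id.continuousOn hh, cfc_id' ℝ C]
    have hpos2 : 0 ≤ cfc (fun s => h s * (s * h s) - σ1 * (h s * h s)) C := by
      refine cfc_nonneg fun s hs => ?_
      rcases le_or_gt s σ1 with hc | hc
      · simp [hhdef, hφ0 s hc]
      · have : h s * (s * h s) - σ1 * (h s * h s) = (h s) ^ 2 * (s - σ1) := by ring
        rw [this]
        exact mul_nonneg (sq_nonneg _) (by linarith)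
    have hsplit : cfc (fun s => h s * (s * h s) - σ1 * (h s * h s)) C
        = F * (C * F) - σ1 • (F * F) := by
      rw [← hD, ← hE, ← cfc_smul σ1 (fun s => h s * h s) C (hh.mul hh),
        ← cfc_sub (fun s => h s * (s * h s)) (fun s => σ1 • (h s * h s)) C
          (hh.mul ((continuous_id.continuousOn).mul hh)) ((hh.mul hh).const_smul σ1)]
      simp only [smul_eq_mul]
    have hineq0 := ((ContinuousLinearMap.nonneg_iff_isPositive _).mp hpos2).inner_nonneg_right v
    rw [hsplit] at hineq0
    have hineq : 0 ≤ (⟪v, (F * (C * F) - σ1 • (F * F)) v⟫_ℂ).re := (Complex.nonneg_iff.mp hineq0).1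
    have expand : (⟪v, (F * (C * F) - σ1 • (F * F)) v⟫_ℂ).re
        = (⟪v, (F * (C * F)) v⟫_ℂ).re - σ1 * (⟪v, (F * F) v⟫_ℂ).re := by
      rw [ContinuousLinearMap.sub_apply, inner_sub_right, Complex.sub_re,
        inner_re_smul_op]
    rw [expand] at hineq
    have e1 : (⟪F v, C (F v)⟫_ℂ).re = (⟪v, (F * (C * F)) v⟫_ℂ).re := by
      rw [selfadj_inner_move F hFsa v (C (F v))]
      rfl
    have e2 : ‖F v‖ ^ 2 = (⟪v, (F * F) v⟫_ℂ).re := by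
      rw [← re_inner_norm_sq, selfadj_inner_move F hFsa v (F v)]
      rfl
    rw [e1, e2]
    linarith
  -- F has rank at most k
  obtain ⟨F0, ⟨V0, hV0fin, hV0k, hV0r⟩, hF0n⟩ := exists_of_approxNum_lt C k hσ1
  obtain ⟨hWfin, hWk⟩ := key_finrank C F0 V0 hV0fin hV0k hV0r hF0n
    (LinearMap.range (F : H →ₗ[ℂ] H)) hrange
  -- conclude
  have hle := approxNum_le (cfc g C) F k ⟨LinearMap.range (F : H →ₗ[ℂ] H), hWfin, hWk, le_refl _⟩
  refine hle.trans ?_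
  have hsub : cfc g C - F = cfc (fun s => g s - h s) C := (cfc_sub g h C hg hh).symm
  rw [hsub]
  refine norm_cfc_le hM fun x hx => ?_
  have hx0 : 0 ≤ x := hspec x hx
  rcases le_or_gt x σ2 with hc | hc
  · have h1 : g x - h x = g x * (1 - φ x) := by rw [hhdef]; ring
    have h2 : 0 ≤ g x * (1 - φ x) := mul_nonneg (hg0 x hx0) (by linarith [hφle1 x])
    rw [Real.norm_eq_abs, h1, abs_of_nonneg h2]
    calc g x * (1 - φ x) ≤ g x * 1 := by
          apply mul_le_mul_of_nonneg_left _ (hg0 x hx0)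
          linarith [hφnn x]
      _ = g x := mul_one _
      _ ≤ M := hgM x hx0 hc
  · have : h x = g x := by rw [hhdef]; simp [hφ1 x hc.le]
    simp [this, hM]

lemma min_one_le_rpow {x u : ℝ} (hx : 0 ≤ x) (hu0 : 0 ≤ u) (hu1 : u ≤ 1) :
    min 1 x ≤ x ^ u := by
  rcases eq_or_lt_of_le hx with h | h
  · rcases eq_or_lt_of_le hu0 with h' | h'
    · simp [← h, ← h']
    · rw [← h, Real.zero_rpow h'.ne']
      simp
  · rcases le_total x 1 with hc | hc
    · rw [min_eq_right hc]
      calc x = x ^ (1:ℝ) := (Real.rpow_one x).symm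
        _ ≤ x ^ u := Real.rpow_le_rpow_of_exponent_ge h hc hu1
    · rw [min_eq_left hc]
      exact Real.one_le_rpow hc hu0

lemma g_le_aux {s t α u : ℝ} (hs : 0 ≤ s) (ht : 0 < t) (hα : 0 ≤ α)
    (hu0 : 0 ≤ u) (hu1 : u ≤ 1) :
    s ^ α * (s + t) ^ (-α) ≤ (s / t) ^ (u * α) := by
  have hst : 0 < s + t := by linarith
  have e1 : s ^ α * (s + t) ^ (-α) = (s / (s + t)) ^ α := by
    rw [Real.div_rpow hs hst.le, Real.rpow_neg hst.le, div_eq_mul_inv]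
  rw [e1]
  have h2 : s / (s + t) ≤ min 1 (s / t) := by
    refine le_min ?_ ?_
    · rw [div_le_one hst]; linarith
    · apply div_le_div_of_nonneg_left hs ht; linarith
  calc (s / (s + t)) ^ α ≤ (min 1 (s / t)) ^ α := by
        apply Real.rpow_le_rpow (div_nonneg hs hst.le) h2 hα
    _ ≤ ((s / t) ^ u) ^ α := by
        apply Real.rpow_le_rpow (le_min zero_le_one (div_nonneg hs ht.le)) ?_ hα
        exact min_one_le_rpow (div_nonneg hs ht.le) hu0 hu1
    _ = (s / t) ^ (u * α) := by
        rw [← Real.rpow_mul (div_nonneg hs ht.le)]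

lemma g_contOn (C : H →L[ℂ] H) (hpos : C.IsPositive) {t α : ℝ} (ht : 0 < t) (hα : 0 ≤ α) :
    ContinuousOn (fun s : ℝ => s ^ α * (s + t) ^ (-α)) (spectrum ℝ C) := by
  have hspec : ∀ s ∈ spectrum ℝ C, 0 ≤ s :=
    spectrum_nonneg_of_nonneg ((ContinuousLinearMap.nonneg_iff_isPositive C).mpr hpos)
  intro s hs
  refine ContinuousWithinAt.mul ?_ ?_
  · exact (Real.continuousAt_rpow_const s α (Or.inr hα)).continuousWithinAt
  · have h2 : ContinuousAt (fun x : ℝ => x + t) s :=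
      (continuous_id.add continuous_const).continuousAt
    have h3 : ContinuousAt (fun x : ℝ => (x + t) ^ (-α)) s :=
      h2.rpow_const (Or.inl (by have := hspec s hs; positivity))
    exact h3.continuousWithinAt

lemma approxNum_opres_le (C : H →L[ℂ] H) (hsa : IsSelfAdjoint C) (hpos : C.IsPositive)
    {t α u : ℝ} (ht : 0 < t) (hα : 0 ≤ α) (hu0 : 0 ≤ u) (hu1 : u ≤ 1)
    {k : ℕ} {b : ℝ} (hb : approxNum C k ≤ b) :
    approxNum (cfc (fun s : ℝ => s ^ α * (s + t) ^ (-α)) C) k ≤ (b / t) ^ (u * α) := by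
  set g : ℝ → ℝ := fun s => s ^ α * (s + t) ^ (-α) with hgdef
  set a := approxNum C k with hadef
  have ha0 : 0 ≤ a := approxNum_nonneg C k
  have hb0 : 0 ≤ b := ha0.trans hb
  have huα : 0 ≤ u * α := mul_nonneg hu0 hα
  have key : ∀ ε : ℝ, 0 < ε → approxNum (cfc g C) k ≤ ((a + 2 * ε) / t) ^ (u * α) := by
    intro ε hε
    refine approxNum_cfc_le C hsa hpos g (g_contOn C hpos ht hα) ?_
      (show a < a + ε by linarith) (show a + ε < a + 2 * ε by linarith)
      (Real.rpow_nonneg (div_nonneg (by linarith) ht.le) _) ?_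
    · intro s hs
      exact mul_nonneg (Real.rpow_nonneg hs α)
        (Real.rpow_nonneg (by linarith) (-α))
    · intro s hs0 hs2
      refine (g_le_aux hs0 ht hα hu0 hu1).trans ?_
      apply Real.rpow_le_rpow (div_nonneg hs0 ht.le) ?_ huα
      gcongr
  have T1 : Filter.Tendsto (fun ε : ℝ => (a + 2 * ε) / t) (nhds 0) (nhds (a / t)) := by
    have hc : Continuous (fun ε : ℝ => (a + 2 * ε) / t) := by continuity
    have := hc.tendsto 0
    simpa using this
  have T2 : Filter.Tendsto (fun ε : ℝ => ((a + 2 * ε) / t) ^ (u * α))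
      (nhdsWithin 0 (Set.Ioi 0)) (nhds ((a / t) ^ (u * α))) := by
    have hcont : ContinuousAt (fun x : ℝ => x ^ (u * α)) (a / t) :=
      Real.continuousAt_rpow_const (a / t) (u * α) (Or.inr huα)
    exact hcont.tendsto.comp (T1.mono_left nhdsWithin_le_nhds)
  have hle : approxNum (cfc g C) k ≤ (a / t) ^ (u * α) := by
    refine ge_of_tendsto T2 ?_
    filter_upwards [self_mem_nhdsWithin] with ε hε
    exact key ε hε
  refine hle.trans ?_
  apply Real.rpow_le_rpow (div_nonneg ha0 ht.le) ?_ huα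
  gcongr

lemma tsum_le_lintegral (f : ℝ → ℝ) (hf : Antitone f) (hf0 : ∀ s : ℝ, 1 ≤ s → 0 ≤ f s)
    {β : ℝ} (hβ : 0 ≤ β) :
    (∑' k : ℕ, ENNReal.ofReal (f ((k : ℝ) + 2) ^ β)) ≤
      ∫⁻ s in Set.Ioi (1 : ℝ), ENNReal.ofReal (f s ^ β) := by
  have hmeas : Measurable (fun s : ℝ => ENNReal.ofReal (f s ^ β)) :=
    ENNReal.measurable_ofReal.comp (hf.measurable.pow_const β)
  have step1 : ∀ k : ℕ, ENNReal.ofReal (f ((k : ℝ) + 2) ^ β) ≤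
      ∫⁻ s in Set.Ioc ((k : ℝ) + 1) ((k : ℝ) + 2), ENNReal.ofReal (f s ^ β) := by
    intro k
    have hvol : volume (Set.Ioc ((k : ℝ) + 1) ((k : ℝ) + 2)) = 1 := by
      rw [Real.volume_Ioc]; norm_num
    calc ENNReal.ofReal (f ((k : ℝ) + 2) ^ β)
        = ∫⁻ _ in Set.Ioc ((k : ℝ) + 1) ((k : ℝ) + 2),
            ENNReal.ofReal (f ((k : ℝ) + 2) ^ β) := by
          rw [setLIntegral_const, hvol, mul_one]
      _ ≤ ∫⁻ s in Set.Ioc ((k : ℝ) + 1) ((k : ℝ) + 2), ENNReal.ofReal (f s ^ β) := by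
          refine setLIntegral_mono hmeas fun s hs => ?_
          apply ENNReal.ofReal_le_ofReal
          refine Real.rpow_le_rpow (hf0 _ (by have := Nat.cast_nonneg (α := ℝ) k; linarith))
            (hf hs.2) hβ
  have hdisj : Pairwise (Function.onFun Disjoint
      (fun k : ℕ => Set.Ioc ((k : ℝ) + 1) ((k : ℝ) + 2))) := by
    intro i j hij
    rcases hij.lt_or_gt with h | h
    · refine Set.Ioc_disjoint_Ioc.mpr ?_
      have : (i : ℝ) + 1 ≤ (j : ℝ) := by exact_mod_cast Nat.succ_le_of_lt h
      refine le_trans (min_le_left _ _) (le_trans ?_ (le_max_right _ _)); linarith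
    · refine Set.Ioc_disjoint_Ioc.mpr ?_
      have : (j : ℝ) + 1 ≤ (i : ℝ) := by exact_mod_cast Nat.succ_le_of_lt h
      refine le_trans (min_le_right _ _) (le_trans ?_ (le_max_left _ _)); linarith
  calc (∑' k : ℕ, ENNReal.ofReal (f ((k : ℝ) + 2) ^ β))
      ≤ ∑' k : ℕ, ∫⁻ s in Set.Ioc ((k : ℝ) + 1) ((k : ℝ) + 2),
          ENNReal.ofReal (f s ^ β) := ENNReal.tsum_le_tsum step1
    _ = ∫⁻ s in ⋃ k : ℕ, Set.Ioc ((k : ℝ) + 1) ((k : ℝ) + 2),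
          ENNReal.ofReal (f s ^ β) :=
        (lintegral_iUnion (fun _ => measurableSet_Ioc) hdisj _).symm
    _ ≤ ∫⁻ s in Set.Ioi (1 : ℝ), ENNReal.ofReal (f s ^ β) := by
        refine lintegral_mono_set ?_
        refine Set.iUnion_subset fun k s hs => ?_
        have := Nat.cast_nonneg (α := ℝ) k
        exact Set.mem_Ioi.mpr (by have := hs.1; linarith)


theorem statement7 (C : H →L[ℂ] H) (hsa : IsSelfAdjoint C) (hpos : C.IsPositive)
    (hcpt : IsCompactOperator C) (f : ℝ → ℝ) (hf : Antitone f)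
    (hfk : ∀ k : ℕ, 1 ≤ k → approxNum C (k - 1) ≤ f k)
    {t : ℝ} (ht : 0 < t) {α : ℝ} (hα : 0 ≤ α) {p : ℝ} (hp : 1 ≤ p) :
    schatten (ENNReal.ofReal p) ((opow C α).comp (resPow C t (-α))) ≤
      ⨅ u ∈ Set.Icc (0 : ℝ) 1,
        (ENNReal.ofReal (f 1 ^ (u * α * p)) +
            ∫⁻ s in Set.Ioi (1 : ℝ), ENNReal.ofReal (f s ^ (u * α * p))) ^ p⁻¹ *
          ENNReal.ofReal (t ^ (-(u * α))) := by
  have hp0 : (0:ℝ) < p := lt_of_lt_of_le one_pos hp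
  have hf0r : ∀ s : ℝ, 1 ≤ s → 0 ≤ f s := by
    intro s hs
    have h1 : (1:ℕ) ≤ ⌈s⌉₊ := by
      have := Nat.ceil_mono hs
      simpa using this
    have h2 : approxNum C (⌈s⌉₊ - 1) ≤ f ⌈s⌉₊ := hfk _ h1
    have h3 : f ⌈s⌉₊ ≤ f s := hf (Nat.le_ceil s)
    exact le_trans (approxNum_nonneg C _) (h2.trans h3)
  refine le_iInf₂ fun u hu => ?_
  obtain ⟨hu0, hu1⟩ := hu
  rcases eq_or_lt_of_le (mul_nonneg hu0 hα) with hzero | hposuα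
  · -- u * α = 0 : the right-hand side is infinite
    have hβ0 : u * α * p = 0 := by rw [← hzero]; ring
    have hint : (∫⁻ s in Set.Ioi (1:ℝ), ENNReal.ofReal (f s ^ (u * α * p))) = ∞ := by
      rw [hβ0]
      simp only [Real.rpow_zero, ENNReal.ofReal_one]
      rw [setLIntegral_const, Real.volume_Ioi, one_mul]
    have ht' : ENNReal.ofReal (t ^ (-(u * α))) = 1 := by
      rw [← hzero]; simp
    rw [hint, ht', mul_one, add_top,
      ENNReal.top_rpow_of_pos (by positivity : (0:ℝ) < p⁻¹)]
    exact le_top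
  -- main case
  set β := u * α * p with hβdef
  have hβpos : 0 < β := by positivity
  have huα : 0 ≤ u * α := mul_nonneg hu0 hα
  set A := (opow C α).comp (resPow C t (-α)) with hAdef
  have hc1 : ContinuousOn (fun s : ℝ => s ^ α) (spectrum ℝ C) := fun s _ =>
    (Real.continuousAt_rpow_const s α (Or.inr hα)).continuousWithinAt
  have hspec : ∀ s ∈ spectrum ℝ C, 0 ≤ s :=
    spectrum_nonneg_of_nonneg ((ContinuousLinearMap.nonneg_iff_isPositive C).mpr hpos)
  have hc2 : ContinuousOn (fun s : ℝ => (s + t) ^ (-α)) (spectrum ℝ C) := by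
    intro s hs
    have h2 : ContinuousAt (fun x : ℝ => x + t) s :=
      (continuous_id.add continuous_const).continuousAt
    have h3 : ContinuousAt (fun x : ℝ => (x + t) ^ (-α)) s :=
      h2.rpow_const (Or.inl (by have := hspec s hs; positivity))
    exact h3.continuousWithinAt
  have hA : A = cfc (fun s : ℝ => s ^ α * (s + t) ^ (-α)) C := by
    rw [hAdef, opow, resPow]
    exact (cfc_mul _ _ C hc1 hc2).symm
  -- pointwise bound on the approximation numbers
  have hk : ∀ k : ℕ, approxNum A k ≤ (f ((k:ℝ) + 1) / t) ^ (u * α) := by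
    intro k
    have hb : approxNum C k ≤ f ((k:ℝ) + 1) := by
      have := hfk (k + 1) (Nat.le_add_left 1 k)
      simpa [Nat.add_sub_cancel] using this
    rw [hA]
    exact approxNum_opres_le C hsa hpos ht hα hu0 hu1 hb
  -- assembling the Schatten norm bound
  have hne : ENNReal.ofReal p ≠ ∞ := ENNReal.ofReal_ne_top
  rw [schatten, if_neg hne, ENNReal.toReal_ofReal hp0.le]
  have hterm : ∀ k : ℕ, ENNReal.ofReal (approxNum A k ^ p) ≤
      ENNReal.ofReal (f ((k:ℝ) + 1) ^ β) * ENNReal.ofReal (t ^ (-β)) := by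
    intro k
    have h1k : (1:ℝ) ≤ (k:ℝ) + 1 := by have := Nat.cast_nonneg (α := ℝ) k; linarith
    have hfk0 : 0 ≤ f ((k:ℝ) + 1) := hf0r _ h1k
    have e1 : ((f ((k:ℝ) + 1) / t) ^ (u * α)) ^ p = f ((k:ℝ) + 1) ^ β * t ^ (-β) := by
      rw [← Real.rpow_mul (div_nonneg hfk0 ht.le), show u * α * p = β from rfl,
        Real.div_rpow hfk0 ht.le, Real.rpow_neg ht.le, div_eq_mul_inv]
    calc ENNReal.ofReal (approxNum A k ^ p)
        ≤ ENNReal.ofReal (((f ((k:ℝ) + 1) / t) ^ (u * α)) ^ p) := by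
          apply ENNReal.ofReal_le_ofReal
          exact Real.rpow_le_rpow (approxNum_nonneg A k) (hk k) hp0.le
      _ = ENNReal.ofReal (f ((k:ℝ) + 1) ^ β) * ENNReal.ofReal (t ^ (-β)) := by
          rw [e1, ENNReal.ofReal_mul (Real.rpow_nonneg hfk0 β)]
  have hsum : (∑' k : ℕ, ENNReal.ofReal (approxNum A k ^ p)) ≤
      (ENNReal.ofReal (f 1 ^ β) +
        ∫⁻ s in Set.Ioi (1:ℝ), ENNReal.ofReal (f s ^ β)) * ENNReal.ofReal (t ^ (-β)) := by
    calc (∑' k : ℕ, ENNReal.ofReal (approxNum A k ^ p))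
        ≤ ∑' k : ℕ, ENNReal.ofReal (f ((k:ℝ) + 1) ^ β) * ENNReal.ofReal (t ^ (-β)) :=
          ENNReal.tsum_le_tsum hterm
      _ = (∑' k : ℕ, ENNReal.ofReal (f ((k:ℝ) + 1) ^ β)) * ENNReal.ofReal (t ^ (-β)) :=
          ENNReal.tsum_mul_right
      _ ≤ (ENNReal.ofReal (f 1 ^ β) +
            ∫⁻ s in Set.Ioi (1:ℝ), ENNReal.ofReal (f s ^ β)) * ENNReal.ofReal (t ^ (-β)) := by
          apply mul_le_mul_left
          have hsplit := tsum_eq_zero_add'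
            (f := fun k : ℕ => ENNReal.ofReal (f ((k:ℝ) + 1) ^ β)) ENNReal.summable
          rw [hsplit]
          apply add_le_add
          · apply le_of_eq; norm_num
          · refine le_trans (le_of_eq ?_) (tsum_le_lintegral f hf hf0r hβpos.le)
            congr 1
            funext k
            push_cast
            ring_nf
  calc (∑' k : ℕ, ENNReal.ofReal (approxNum A k ^ p)) ^ p⁻¹
      ≤ ((ENNReal.ofReal (f 1 ^ β) +
          ∫⁻ s in Set.Ioi (1:ℝ), ENNReal.ofReal (f s ^ β)) * ENNReal.ofReal (t ^ (-β))) ^ p⁻¹ :=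
        ENNReal.rpow_le_rpow hsum (by positivity)
    _ = (ENNReal.ofReal (f 1 ^ β) +
          ∫⁻ s in Set.Ioi (1:ℝ), ENNReal.ofReal (f s ^ β)) ^ p⁻¹ *
        (ENNReal.ofReal (t ^ (-β))) ^ p⁻¹ :=
        ENNReal.mul_rpow_of_nonneg _ _ (by positivity)
    _ = (ENNReal.ofReal (f 1 ^ β) +
          ∫⁻ s in Set.Ioi (1:ℝ), ENNReal.ofReal (f s ^ β)) ^ p⁻¹ *
        ENNReal.ofReal (t ^ (-(u * α))) := by
        congr 1
        rw [ENNReal.ofReal_rpow_of_pos (Real.rpow_pos_of_pos ht _),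
          ← Real.rpow_mul ht.le]
        congr 1
        rw [hβdef]
        rw [show -(u * α * p) * p⁻¹ = -(u * α) * (p * p⁻¹) by ring,
          mul_inv_cancel₀ hp0.ne', mul_one]


end SubspaceLearning
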